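/- arXiv:1401.3169 — 8 statements merged into one kernel-verified Lean document; each statement's English description precedes it below -/
import Mathlib

section
/- In a normed space, if inf over μ ∈ ℂ of ‖x + μ • y‖ equals 0 and x ≠ 0, then there exists a unimodular λ such that ‖x + λ • y‖ = ‖x‖ + ‖y‖. That is, 0-approximate parallelism implies exact parallelism. -/
theorem stmt_4 {V : Type*} [NormedAddCommGroup V] [NormedSpace ℂ V]
    (x y : V) (hx : x ≠ 0) (h : (⨅ μ : ℂ, ‖x + μ • y‖) = 0) :
    ∃ lam : ℂ, ‖lam‖ = 1 ∧ ‖x + lam • y‖ = ‖x‖ + ‖y‖ := by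
  -- the set S = {x + μ • y} is closed and 0 is in its closure
  set S : Set V := Set.range (fun μ : ℂ => x + μ • y) with hS
  have hSeq : S = (fun v => x + v) '' (Submodule.span ℂ {y} : Submodule ℂ V) := by
    ext v
    constructor
    · rintro ⟨μ, rfl⟩
      exact ⟨μ • y, Submodule.smul_mem _ μ (Submodule.mem_span_singleton_self y), rfl⟩
    · rintro ⟨w, hw, rfl⟩
      obtain ⟨μ, rfl⟩ := Submodule.mem_span_singleton.mp hw
      exact ⟨μ, rfl⟩
  have hclosed : IsClosed S := by
    rw [hSeq]
    have h1 : IsClosed (Submodule.span ℂ ({y} : Set V) : Set V) :=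
      (Submodule.span ℂ ({y} : Set V)).closed_of_finiteDimensional
    have : (fun v => x + v) '' (Submodule.span ℂ {y} : Submodule ℂ V)
        = (Homeomorph.addLeft x) '' (Submodule.span ℂ {y} : Submodule ℂ V) := rfl
    rw [this]
    exact (Homeomorph.addLeft x).isClosedMap _ h1
  have hmem : (0 : V) ∈ S := by
    rw [← hclosed.closure_eq]
    rw [Metric.mem_closure_iff]
    intro ε hε
    have : (⨅ μ : ℂ, ‖x + μ • y‖) < ε := by rw [h]; exact hε
    obtain ⟨μ, hμ⟩ := exists_lt_of_ciInf_lt this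
    exact ⟨x + μ • y, ⟨μ, rfl⟩, by rw [dist_eq_norm, norm_sub_rev, sub_zero]; exact hμ⟩
  obtain ⟨μ₀, hμ₀⟩ := hmem
  have hμ₀' : x = -μ₀ • y := by
    have h2 : x + μ₀ • y = 0 := hμ₀
    rw [add_eq_zero_iff_eq_neg] at h2
    rw [h2, neg_smul]
  have hμ₀ne : μ₀ ≠ 0 := by
    rintro rfl
    simp at hμ₀'
    exact hx hμ₀'
  have hnμ₀ : ‖μ₀‖ ≠ 0 := norm_ne_zero_iff.mpr hμ₀ne
  refine ⟨-(‖μ₀‖ : ℂ)⁻¹ * μ₀, ?_, ?_⟩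
  · simp only [norm_mul, norm_neg, norm_inv, Complex.norm_real, Real.norm_eq_abs,
      abs_norm]
    exact inv_mul_cancel₀ hnμ₀
  · have hxy : x + (-(‖μ₀‖ : ℂ)⁻¹ * μ₀) • y = (-(‖μ₀‖ : ℂ)⁻¹ * μ₀ - μ₀) • y := by
      rw [hμ₀', sub_smul, neg_smul]
      abel
    rw [hxy, norm_smul]
    have hnx : ‖x‖ = ‖μ₀‖ * ‖y‖ := by rw [hμ₀', norm_smul, norm_neg]
    have : ‖-(‖μ₀‖ : ℂ)⁻¹ * μ₀ - μ₀‖ = ‖μ₀‖ + 1 := by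
      have : -(‖μ₀‖ : ℂ)⁻¹ * μ₀ - μ₀ = -(((‖μ₀‖ : ℂ)⁻¹ + 1) * μ₀) := by ring
      rw [this, norm_neg, norm_mul]
      have h1 : ‖(‖μ₀‖ : ℂ)⁻¹ + 1‖ = ‖μ₀‖⁻¹ + 1 := by
        rw [show ((‖μ₀‖ : ℂ)⁻¹ + 1 : ℂ) = ((‖μ₀‖⁻¹ + 1 : ℝ) : ℂ) by push_cast; ring]
        rw [Complex.norm_real]
        exact abs_of_nonneg (by positivity)
      rw [h1]
      rw [add_mul, inv_mul_cancel₀ hnμ₀]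
      ring
    rw [this, hnx]
    ring
end

section
/- If T is a compact self-adjoint operator on a complex Hilbert space ℋ ≠ 0, then ‖T + I‖ = ‖T‖ + 1 or ‖T - I‖ = ‖T‖ + 1; in particular T is parallel to the identity operator. -/
theorem stmt_5 {H : Type*} [NormedAddCommGroup H] [InnerProductSpace ℂ H]
    [CompleteSpace H] [Nontrivial H]
    (T : H →L[ℂ] H) (hc : IsCompactOperator T) (hsa : IsSelfAdjoint T) :
    ‖T + 1‖ = ‖T‖ + 1 ∨ ‖T - 1‖ = ‖T‖ + 1 := by
  obtain ⟨z, hz, hznorm⟩ := spectrum.exists_nnnorm_eq_spectralRadius (A := H →L[ℂ] H) T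
  rw [hsa.spectralRadius_eq_nnnorm] at hznorm
  have hzn : ‖z‖ = ‖T‖ := by exact_mod_cast congrArg ENNReal.toReal hznorm
  have hre : z = (z.re : ℂ) := hsa.mem_spectrum_eq_re hz
  have habs : |z.re| = ‖T‖ := by
    rw [← hzn, hre]; simp [Complex.norm_real, abs_of_nonneg, Real.norm_eq_abs]
  rcases abs_eq (norm_nonneg T) |>.mp habs with h | h
  · left
    refine le_antisymm (by simpa using norm_add_le T 1) ?_
    have hmem : z + 1 ∈ spectrum ℂ (T + 1) := by
      have := spectrum.add_mem_add_iff (a := T) (r := z) (s := (1 : ℂ)) |>.mpr hz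
      simpa [add_comm, map_one] using this
    have := spectrum.norm_le_norm_of_mem hmem
    calc ‖T‖ + 1 = ‖z + 1‖ := by
          rw [hre, h]; rw [show ((‖T‖ : ℂ) + 1) = ((‖T‖ + 1 : ℝ) : ℂ) by push_cast; ring]
          rw [Complex.norm_real, Real.norm_eq_abs, abs_of_nonneg (by positivity)]
      _ ≤ ‖T + 1‖ := this
  · right
    refine le_antisymm (by simpa using norm_sub_le T 1) ?_
    have hmem : z - 1 ∈ spectrum ℂ (T - 1) := by
      have := spectrum.add_mem_add_iff (a := T) (r := z) (s := (-1 : ℂ)) |>.mpr hz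
      simpa [sub_eq_add_neg, add_comm] using this
    have := spectrum.norm_le_norm_of_mem hmem
    calc ‖T‖ + 1 = ‖z - 1‖ := by
          rw [hre, h]
          rw [show ((-‖T‖ : ℝ) : ℂ) - 1 = ((-(‖T‖ + 1) : ℝ) : ℂ) by push_cast; ring]
          rw [Complex.norm_real, Real.norm_eq_abs, abs_neg, abs_of_nonneg (by positivity)]
      _ ≤ ‖T - 1‖ := this
end

section
/- For T₁, T₂ ∈ B(ℋ): if T₁ ∥ T₂ then ‖T₁* T₂‖ = ‖T₁‖ · ‖T₂‖. -/
open scoped ComplexInnerProductSpace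

open ContinuousLinearMap in
theorem stmt_9 {H : Type*} [NormedAddCommGroup H] [InnerProductSpace ℂ H]
    [CompleteSpace H] (T₁ T₂ : H →L[ℂ] H)
    (h : ∃ lam : ℂ, ‖lam‖ = 1 ∧ ‖T₁ + lam • T₂‖ = ‖T₁‖ + ‖T₂‖) :
    ‖ContinuousLinearMap.adjoint T₁ * T₂‖ = ‖T₁‖ * ‖T₂‖ := by
  obtain ⟨lam, hlam, heq⟩ := h
  set a := ‖T₁‖ with ha
  set b := ‖T₂‖ with hb
  set c := ‖ContinuousLinearMap.adjoint T₁ * T₂‖ with hc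
  have hle : c ≤ a * b := by
    calc c ≤ ‖ContinuousLinearMap.adjoint T₁‖ * ‖T₂‖ := norm_mul_le _ _
      _ = a * b := by rw [LinearIsometryEquiv.norm_map]
  have ha0 : 0 ≤ a := norm_nonneg _
  have hb0 : 0 ≤ b := norm_nonneg _
  have hc0 : 0 ≤ c := norm_nonneg _
  have hK : 0 ≤ a ^ 2 + b ^ 2 + 2 * c := by positivity
  have key : ∀ x : H, ‖(T₁ + lam • T₂) x‖ ^ 2 ≤ (a ^ 2 + b ^ 2 + 2 * c) * ‖x‖ ^ 2 := by
    intro x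
    have h1 : ⟪T₁ x, (lam • T₂) x⟫ = lam * ⟪x, (ContinuousLinearMap.adjoint T₁ * T₂) x⟫ := by
      simp [ContinuousLinearMap.smul_apply, inner_smul_right, ContinuousLinearMap.mul_apply,
        ContinuousLinearMap.adjoint_inner_right]
    have h2 : ‖(T₁ + lam • T₂) x‖ ^ 2
        = ‖T₁ x‖ ^ 2 + 2 * RCLike.re ⟪T₁ x, (lam • T₂) x⟫ + ‖(lam • T₂) x‖ ^ 2 := by
      rw [ContinuousLinearMap.add_apply]
      exact norm_add_sq (𝕜 := ℂ) _ _
    have h3 : RCLike.re ⟪T₁ x, (lam • T₂) x⟫ ≤ c * ‖x‖ ^ 2 := by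
      calc RCLike.re ⟪T₁ x, (lam • T₂) x⟫ ≤ ‖⟪T₁ x, (lam • T₂) x⟫‖ :=
            by exact RCLike.re_le_norm _
        _ = ‖⟪x, (ContinuousLinearMap.adjoint T₁ * T₂) x⟫‖ := by
            rw [h1, norm_mul, hlam, one_mul]
        _ ≤ ‖x‖ * ‖(ContinuousLinearMap.adjoint T₁ * T₂) x‖ := norm_inner_le_norm _ _
        _ ≤ ‖x‖ * (c * ‖x‖) := by
            gcongr
            exact (ContinuousLinearMap.adjoint T₁ * T₂).le_opNorm x
        _ = c * ‖x‖ ^ 2 := by ring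
    have h4 : ‖T₁ x‖ ≤ a * ‖x‖ := T₁.le_opNorm x
    have h5 : ‖(lam • T₂) x‖ ≤ b * ‖x‖ := by
      rw [ContinuousLinearMap.smul_apply, norm_smul, hlam, one_mul]
      exact T₂.le_opNorm x
    nlinarith [norm_nonneg (T₁ x), norm_nonneg ((lam • T₂) x), norm_nonneg x]
  have hnorm : ‖T₁ + lam • T₂‖ ≤ Real.sqrt (a ^ 2 + b ^ 2 + 2 * c) := by
    apply ContinuousLinearMap.opNorm_le_bound _ (Real.sqrt_nonneg _)
    intro x
    have := key x
    calc ‖(T₁ + lam • T₂) x‖ = Real.sqrt (‖(T₁ + lam • T₂) x‖ ^ 2) := by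
          rw [Real.sqrt_sq (norm_nonneg _)]
      _ ≤ Real.sqrt ((a ^ 2 + b ^ 2 + 2 * c) * ‖x‖ ^ 2) := Real.sqrt_le_sqrt this
      _ = Real.sqrt (a ^ 2 + b ^ 2 + 2 * c) * ‖x‖ := by
          rw [Real.sqrt_mul hK, Real.sqrt_sq (norm_nonneg x)]
  rw [heq] at hnorm
  have hsq : (a + b) ^ 2 ≤ a ^ 2 + b ^ 2 + 2 * c := by
    have := pow_le_pow_left₀ (by positivity) hnorm 2
    rwa [Real.sq_sqrt hK] at this
  nlinarith
end

section
/- For T₁, T₂ ∈ B(ℋ): if there exists a unimodular λ with ‖T₁*(T₁ + λT₂)‖ = ‖T₁‖(‖T₁‖ + ‖T₂‖), then T₁ ∥ T₂. -/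
theorem stmt_10 {H : Type*} [NormedAddCommGroup H] [InnerProductSpace ℂ H]
    [CompleteSpace H] (T₁ T₂ : H →L[ℂ] H)
    (h : ∃ lam : ℂ, ‖lam‖ = 1 ∧
      ‖ContinuousLinearMap.adjoint T₁ * (T₁ + lam • T₂)‖ = ‖T₁‖ * (‖T₁‖ + ‖T₂‖)) :
    ∃ lam : ℂ, ‖lam‖ = 1 ∧ ‖T₁ + lam • T₂‖ = ‖T₁‖ + ‖T₂‖ := by
  obtain ⟨lam, hlam, heq⟩ := h
  refine ⟨lam, hlam, ?_⟩
  by_cases hT : T₁ = 0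
  · simp [hT, norm_smul, hlam]
  · have h1 : (0:ℝ) < ‖T₁‖ := norm_pos_iff.mpr hT
    have hle : ‖T₁ + lam • T₂‖ ≤ ‖T₁‖ + ‖T₂‖ := by
      calc ‖T₁ + lam • T₂‖ ≤ ‖T₁‖ + ‖lam • T₂‖ := norm_add_le _ _
        _ = ‖T₁‖ + ‖T₂‖ := by rw [norm_smul, hlam, one_mul]
    have hge : ‖T₁‖ + ‖T₂‖ ≤ ‖T₁ + lam • T₂‖ := by
      have hb : ‖ContinuousLinearMap.adjoint T₁ * (T₁ + lam • T₂)‖ ≤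
          ‖ContinuousLinearMap.adjoint T₁‖ * ‖T₁ + lam • T₂‖ := norm_mul_le _ _
      rw [heq, LinearIsometryEquiv.norm_map] at hb
      exact le_of_mul_le_mul_left hb h1
    linarith
end

section
/- For ε ∈ [0,1) and T₁, T₂ ∈ B(ℋ): if T₁ is ε-parallel to T₂, then for every unit vector ξ ∈ ℋ, |⟨T₁ξ, T₂ξ⟩|² ≥ ‖T₁ξ‖²‖T₂ξ‖² − ε²‖T₁‖²‖T₂‖². -/
set_option maxHeartbeats 1000000

theorem stmt_11 {H : Type*} [NormedAddCommGroup H] [InnerProductSpace ℂ H]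
    [CompleteSpace H] (T₁ T₂ : H →L[ℂ] H) (ε : ℝ) (hε : 0 ≤ ε) (hε1 : ε < 1)
    (h : (⨅ μ : ℂ, ‖T₁ + μ • T₂‖) ≤ ε * ‖T₁‖) :
    ∀ ξ : H, ‖ξ‖ = 1 →
      ‖(inner ℂ (T₁ ξ) (T₂ ξ) : ℂ)‖ ^ 2 ≥
        ‖T₁ ξ‖ ^ 2 * ‖T₂ ξ‖ ^ 2 - ε ^ 2 * ‖T₁‖ ^ 2 * ‖T₂‖ ^ 2 := by
  intro ξ hξ
  set a := T₁ ξ with ha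
  set b := T₂ ξ with hb
  clear_value a b
  by_cases hb0 : b = 0
  · simp [hb0]
    nlinarith [norm_nonneg a, norm_nonneg T₁, norm_nonneg T₂, sq_nonneg (ε * ‖T₁‖ * ‖T₂‖)]
  · have hbn : (0:ℝ) < ‖b‖ := norm_pos_iff.mpr hb0
    set μ₀ : ℂ := -(inner ℂ b a) / (‖b‖^2 : ℂ) with hμ₀
    clear_value μ₀
    have hbc : (inner ℂ b b : ℂ) = ((‖b‖:ℂ))^2 := inner_self_eq_norm_sq_to_K b
    have hb2c : ((‖b‖:ℂ))^2 ≠ 0 := by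
      norm_cast; positivity
    have horth : inner ℂ (a + μ₀ • b) b = (0:ℂ) := by
      rw [inner_add_left, inner_smul_left, hbc, hμ₀, map_div₀, map_neg, inner_conj_symm]
      have hc : (starRingEnd ℂ) (((‖b‖:ℂ))^2) = ((‖b‖:ℂ))^2 := by
        rw [map_pow, Complex.conj_ofReal]
      rw [hc]
      field_simp
      rw [div_self (Complex.ofReal_ne_zero.mpr hbn.ne')]; ring
    have h1 : ∀ μ : ℂ, ‖a + μ₀ • b‖ ≤ ‖T₁ + μ • T₂‖ := by
      intro μ
      have step1 : ‖a + μ₀ • b‖ ≤ ‖a + μ • b‖ := by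
        have hdecomp : a + μ • b = (a + μ₀ • b) + (μ - μ₀) • b := by
          rw [sub_smul]; abel
        have horth2 : inner ℂ (a + μ₀ • b) ((μ - μ₀) • b) = (0:ℂ) := by
          rw [inner_smul_right, horth, mul_zero]
        have hpyth := norm_add_sq_eq_norm_sq_add_norm_sq_of_inner_eq_zero _ _ horth2
        rw [hdecomp]
        nlinarith [norm_nonneg (a + μ₀ • b), norm_nonneg ((a + μ₀ • b) + (μ - μ₀) • b),
          sq_nonneg ‖(μ - μ₀) • b‖, hpyth]
      have step2 : ‖a + μ • b‖ ≤ ‖T₁ + μ • T₂‖ := by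
        have := (T₁ + μ • T₂).le_opNorm ξ
        simpa [ha, hb, hξ] using this
      linarith
    have h2 : ‖a + μ₀ • b‖ ≤ ε * ‖T₁‖ := le_trans (le_ciInf h1) h
    -- Pythagorean decomposition of ‖a‖²
    have h3 : ‖a‖^2 = ‖a + μ₀ • b‖^2 + ‖μ₀‖^2 * ‖b‖^2 := by
      have hdecomp : a = (a + μ₀ • b) + (-μ₀) • b := by
        rw [neg_smul]; abel
      have horth2 : inner ℂ (a + μ₀ • b) ((-μ₀) • b) = (0:ℂ) := by
        rw [inner_smul_right, horth, mul_zero]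
      have hpyth := norm_add_sq_eq_norm_sq_add_norm_sq_of_inner_eq_zero _ _ horth2
      rw [← hdecomp] at hpyth
      have hnm := hpyth
      have hs : ‖(-μ₀) • b‖ = ‖μ₀‖ * ‖b‖ := by rw [norm_smul, norm_neg]
      rw [hs] at hnm
      nlinarith [hnm]
    have h4m : ‖μ₀‖ * ‖b‖^2 = ‖(inner ℂ a b : ℂ)‖ := by
      rw [hμ₀, norm_div, norm_neg, ← norm_inner_symm]
      have hnb : ‖((‖b‖:ℂ))^2‖ = ‖b‖^2 := by
        rw [norm_pow, Complex.norm_real, norm_norm]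
      rw [hnb]
      field_simp
    have hbT : ‖b‖ ≤ ‖T₂‖ := by
      have := T₂.le_opNorm ξ
      simpa [hb, hξ] using this
    have heps : (0:ℝ) ≤ ε * ‖T₁‖ := mul_nonneg hε (norm_nonneg _)
    have h2sq : ‖a + μ₀ • b‖^2 ≤ (ε * ‖T₁‖)^2 := by
      nlinarith [norm_nonneg (a + μ₀ • b)]
    have hb2 : ‖b‖^2 ≤ ‖T₂‖^2 := by nlinarith
    have hI2 : ‖(inner ℂ a b : ℂ)‖^2 = (‖a‖^2 - ‖a + μ₀ • b‖^2) * ‖b‖^2 := by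
      rw [← h4m]
      linear_combination (-(‖b‖^2)) * h3
    have e1 : ‖a + μ₀ • b‖^2 * ‖b‖^2 ≤ (ε * ‖T₁‖)^2 * ‖b‖^2 :=
      mul_le_mul_of_nonneg_right h2sq (sq_nonneg ‖b‖)
    have e2 : (ε * ‖T₁‖)^2 * ‖b‖^2 ≤ (ε * ‖T₁‖)^2 * ‖T₂‖^2 :=
      mul_le_mul_of_nonneg_left hb2 (sq_nonneg (ε * ‖T₁‖))
    nlinarith [hI2, e1, e2]
end

section
/- For T ∈ B(ℋ): T ∥ I if and only if there exist a sequence of unit vectors (ξₙ) in ℋ and a unimodular λ such that ‖Tξₙ − λ‖T‖ξₙ‖ → 0. -/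
open Filter ComplexConjugate
open scoped InnerProductSpace

set_option maxHeartbeats 1000000 in
theorem stmt_15 {H : Type*} [NormedAddCommGroup H] [InnerProductSpace ℂ H]
    [CompleteSpace H] (T : H →L[ℂ] H) :
    (∃ lam : ℂ, ‖lam‖ = 1 ∧ ‖T + lam • (1 : H →L[ℂ] H)‖ = ‖T‖ + 1) ↔
    (∃ (ξ : ℕ → H) (lam : ℂ), (∀ n, ‖ξ n‖ = 1) ∧ ‖lam‖ = 1 ∧
      Filter.Tendsto (fun n => ‖T (ξ n) - (lam * ‖T‖) • ξ n‖)
        Filter.atTop (nhds 0)) := by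
  constructor
  · rintro ⟨lam, hlam, hnorm⟩
    set S := T + lam • (1 : H →L[ℂ] H) with hS
    have hT0 : (0:ℝ) ≤ ‖T‖ := norm_nonneg _
    have hsel : ∀ n : ℕ, ∃ ξ : H, ‖ξ‖ = 1 ∧ ‖T‖ + 1 - 1/(n+1) < ‖S ξ‖ := by
      intro n
      have hε : (0:ℝ) < 1/(n+1) := by positivity
      have hε1 : (1:ℝ)/(n+1) ≤ 1 := by
        rw [div_le_one (by positivity)]
        exact le_add_of_nonneg_left (Nat.cast_nonneg n)
      have hr : ‖T‖ + 1 - 1/(n+1) < ‖S‖ := by rw [hnorm]; linarith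
      obtain ⟨x, hx1, hx2⟩ := S.exists_lt_apply_of_lt_opNorm hr
      have hx0 : x ≠ 0 := by
        rintro rfl
        simp only [map_zero, norm_zero] at hx2
        linarith
      have hxn : (0:ℝ) < ‖x‖ := norm_pos_iff.2 hx0
      refine ⟨((‖x‖⁻¹ : ℝ) : ℂ) • x, ?_, ?_⟩
      · rw [norm_smul]
        simp [abs_of_nonneg (le_of_lt (inv_pos.2 hxn)), inv_mul_cancel₀ hxn.ne']
      · rw [map_smul, norm_smul]
        have : ‖((‖x‖⁻¹ : ℝ) : ℂ)‖ = ‖x‖⁻¹ := by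
          simp [abs_of_nonneg (le_of_lt (inv_pos.2 hxn))]
        rw [this]
        have h1 : (1:ℝ) ≤ ‖x‖⁻¹ := (one_le_inv₀ hxn).2 hx1.le
        calc ‖T‖ + 1 - 1/(n+1) < ‖S x‖ := hx2
          _ = 1 * ‖S x‖ := (one_mul _).symm
          _ ≤ ‖x‖⁻¹ * ‖S x‖ := by
            exact mul_le_mul_of_nonneg_right h1 (norm_nonneg _)
    choose ξ hξ1 hξ2 using hsel
    refine ⟨ξ, lam, hξ1, hlam, ?_⟩
    set C : ℝ := 2 * ‖T‖ * (‖T‖ + 1) with hC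
    have hC0 : 0 ≤ C := by positivity
    have hbound : ∀ n : ℕ, ‖T (ξ n) - (lam * ‖T‖) • ξ n‖ ^ 2 ≤ C * (1/(n+1)) := by
      intro n
      set u := ξ n with hu
      have hun : ‖u‖ = 1 := hξ1 n
      have hTu : ‖T u‖ ≤ ‖T‖ := by simpa [hun] using T.le_opNorm u
      have hlu : ‖lam • u‖ = 1 := by rw [norm_smul, hlam, hun, one_mul]
      set k : ℝ := RCLike.re ⟪T u, lam • u⟫_ℂ with hk
      have hkle : k ≤ ‖T‖ := by
        calc k ≤ ‖T u‖ * ‖lam • u‖ := re_inner_le_norm _ _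
          _ ≤ ‖T‖ * 1 := by
            exact mul_le_mul hTu hlu.le (norm_nonneg _) hT0
          _ = ‖T‖ := mul_one _
      have hSu : ‖S u‖ ^ 2 = ‖T u‖ ^ 2 + 2 * k + 1 := by
        have : S u = T u + lam • u := by
          simp [hS, ContinuousLinearMap.add_apply]
        rw [this, norm_add_sq (𝕜 := ℂ), hlu, hk]
        ring
      have htarget : ‖T u - (lam * ‖T‖) • u‖ ^ 2
          = ‖T u‖ ^ 2 - 2 * ‖T‖ * k + ‖T‖ ^ 2 := by
        have h1 : (lam * (‖T‖:ℂ)) • u = ((‖T‖:ℝ) : ℂ) • (lam • u) := by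
          rw [smul_smul, mul_comm]
        rw [norm_sub_sq (𝕜 := ℂ), h1, inner_smul_right]
        have h2 : ‖((‖T‖:ℝ):ℂ) • (lam • u)‖ = ‖T‖ := by
          rw [norm_smul, hlu]
          simp [abs_of_nonneg hT0]
        have h3 : RCLike.re ((((‖T‖:ℝ)):ℂ) * ⟪T u, lam • u⟫_ℂ) = ‖T‖ * k := by
          rw [hk]; exact RCLike.re_ofReal_mul _ _
        rw [h2, h3]
        ring
      -- lower bound on ‖S u‖ squared
      have hε : (0:ℝ) < 1/(n+1) := by positivity
      have hε1 : (1:ℝ)/(n+1) ≤ 1 := by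
        rw [div_le_one (by positivity)]
        exact le_add_of_nonneg_left (Nat.cast_nonneg n)
      have ha : (0:ℝ) ≤ ‖T‖ + 1 - 1/(n+1) := by linarith
      have hsq : (‖T‖ + 1 - 1/(n+1)) ^ 2 < ‖S u‖ ^ 2 :=
        pow_lt_pow_left₀ (hξ2 n) ha two_ne_zero
      have hTu0 : 0 ≤ ‖T u‖ := norm_nonneg _
      have hTu2 : ‖T u‖ ^ 2 ≤ ‖T‖ ^ 2 := pow_le_pow_left₀ hTu0 hTu 2
      have hkge : ‖T‖ - k ≤ (1/(n+1)) * (‖T‖ + 1) := by nlinarith [hsq, hSu, hTu2]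
      have hmul := mul_le_mul_of_nonneg_left hkge (by positivity : (0:ℝ) ≤ 2 * ‖T‖)
      nlinarith [htarget, hTu2, hmul, hkle]
    have hupper : Tendsto (fun n : ℕ => Real.sqrt (C * (1/(n+1)))) atTop (nhds 0) := by
      have h1 : Tendsto (fun n : ℕ => C * (1/(n+1))) atTop (nhds 0) := by
        simpa using tendsto_one_div_add_atTop_nhds_zero_nat.const_mul C
      have h2 := (Real.continuous_sqrt.tendsto 0).comp h1
      simpa [Function.comp_def] using h2
    refine tendsto_of_tendsto_of_tendsto_of_le_of_le tendsto_const_nhds hupper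
      (fun n => norm_nonneg _) (fun n => ?_)
    have h := hbound n
    have h0 : (0:ℝ) ≤ ‖T (ξ n) - (lam * ‖T‖) • ξ n‖ := norm_nonneg _
    calc ‖T (ξ n) - (lam * ‖T‖) • ξ n‖
        = Real.sqrt (‖T (ξ n) - (lam * ‖T‖) • ξ n‖ ^ 2) := by
          rw [Real.sqrt_sq h0]
      _ ≤ Real.sqrt (C * (1/(n+1))) := Real.sqrt_le_sqrt h
  · rintro ⟨ξ, lam, hξ, hlam, htend⟩
    haveI hnt : Nontrivial H := by
      refine ⟨ξ 0, 0, ?_⟩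
      intro h
      have := hξ 0
      rw [h, norm_zero] at this
      norm_num at this
    refine ⟨lam, hlam, ?_⟩
    have hle : ‖T + lam • (1 : H →L[ℂ] H)‖ ≤ ‖T‖ + 1 := by
      calc ‖T + lam • (1 : H →L[ℂ] H)‖ ≤ ‖T‖ + ‖lam • (1 : H →L[ℂ] H)‖ := norm_add_le _ _
        _ = ‖T‖ + 1 := by rw [norm_smul, hlam, norm_one, one_mul]
    have hge : ‖T‖ + 1 ≤ ‖T + lam • (1 : H →L[ℂ] H)‖ := by
      have key : ∀ n : ℕ, ‖T‖ + 1 - ‖T (ξ n) - (lam * ‖T‖) • ξ n‖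
          ≤ ‖T + lam • (1 : H →L[ℂ] H)‖ := by
        intro n
        set u := ξ n with hu
        have hun : ‖u‖ = 1 := hξ n
        have h1 : ‖(T + lam • (1 : H →L[ℂ] H)) u‖ ≤ ‖T + lam • (1 : H →L[ℂ] H)‖ := by
          simpa [hun] using (T + lam • (1 : H →L[ℂ] H)).le_opNorm u
        have h2 : (T + lam • (1 : H →L[ℂ] H)) u
            = (T u - (lam * ‖T‖) • u) + (lam * (‖T‖ + 1)) • u := by
          simp only [ContinuousLinearMap.add_apply, ContinuousLinearMap.smul_apply,
            ContinuousLinearMap.one_apply]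
          rw [mul_add, add_smul, mul_one]
          abel
        have h3 : ‖(lam * ((‖T‖:ℂ) + 1)) • u‖ = ‖T‖ + 1 := by
          rw [norm_smul, norm_mul, hlam, hun, one_mul, mul_one]
          rw [show ((‖T‖:ℂ) + 1) = (((‖T‖ + 1 : ℝ)):ℂ) by push_cast; ring]
          rw [Complex.norm_real]
          exact Real.norm_of_nonneg (by positivity)
        have h5 : (lam * ((‖T‖:ℂ) + 1)) • u
            = (T + lam • (1 : H →L[ℂ] H)) u - (T u - (lam * ‖T‖) • u) := by
          rw [h2]; abel
        have h4 : ‖(lam * ((‖T‖:ℂ) + 1)) • u‖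
            ≤ ‖(T + lam • (1 : H →L[ℂ] H)) u‖ + ‖T u - (lam * ‖T‖) • u‖ := by
          rw [h5]; exact norm_sub_le _ _
        rw [h3] at h4
        linarith
      have hlim : Tendsto (fun n : ℕ => ‖T‖ + 1 - ‖T (ξ n) - (lam * ‖T‖) • ξ n‖)
          atTop (nhds (‖T‖ + 1)) := by
        have h := (tendsto_const_nhds :
            Tendsto (fun _ : ℕ => ‖T‖ + 1) atTop (nhds (‖T‖ + 1))).sub htend
        simpa using h
      exact le_of_tendsto' hlim key
    linarith
end

section
/- For T ∈ B(ℋ): if T ∥ I then Tᵐ ∥ I for every natural number m ≥ 1, and moreover ‖Tᵐ‖ = ‖T‖ᵐ. -/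
open ContinuousLinearMap Complex

set_option maxHeartbeats 1000000 in
private lemma approx_eig {H : Type*} [NormedAddCommGroup H] [InnerProductSpace ℂ H]
    (T : H →L[ℂ] H) (lam : ℂ) (hl : ‖lam‖ = 1)
    (hT : ‖T + lam • (1 : H →L[ℂ] H)‖ = ‖T‖ + 1) {ε : ℝ} (hε : 0 < ε) :
    ∃ x : H, ‖x‖ = 1 ∧ ‖T x - (lam * (‖T‖ : ℂ)) • x‖ ≤ ε := by
  set r := ‖T‖ with hr
  have hr0 : 0 ≤ r := norm_nonneg T
  set A := T + lam • (1 : H →L[ℂ] H) with hA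
  set ε' : ℝ := min (1/2) (ε^2 / (2*r*(r+1) + 1)) with hε'
  have hd : (0:ℝ) < 2*r*(r+1) + 1 := by positivity
  have hε'0 : 0 < ε' := lt_min (by norm_num) (by positivity)
  have hε'half : ε' ≤ 1/2 := min_le_left _ _
  have hε'2 : 2*r*(r+1) * ε' ≤ ε^2 := by
    have h1 : ε' ≤ ε^2 / (2*r*(r+1) + 1) := min_le_right _ _
    have h2 : 0 ≤ 2*r*(r+1) := by positivity
    calc 2*r*(r+1) * ε' ≤ (2*r*(r+1) + 1) * (ε^2 / (2*r*(r+1) + 1)) := by nlinarith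
    _ = ε^2 := by field_simp
  -- find a near-maximizing unit vector
  have hlt : ‖A‖ - ε' < ‖A‖ := by linarith
  obtain ⟨z, hz1, hz2⟩ := A.exists_lt_apply_of_lt_opNorm hlt
  have hApos : ‖A‖ - ε' ≥ 1/2 := by
    rw [hT]; linarith
  have hz0 : z ≠ 0 := by
    intro h0
    rw [h0] at hz2; simp at hz2; linarith
  have hzn : 0 < ‖z‖ := norm_pos_iff.mpr hz0
  set x : H := (‖z‖ : ℝ)⁻¹ • z with hx
  have hx1 : ‖x‖ = 1 := by
    rw [hx, norm_smul, norm_inv, norm_norm, inv_mul_cancel₀ hzn.ne']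
  have hAx : ‖A‖ - ε' < ‖A x‖ := by
    have : A x = (‖z‖ : ℝ)⁻¹ • A z := A.map_smul_of_tower (‖z‖)⁻¹ z
    rw [this, norm_smul, norm_inv, norm_norm]
    have h1 : (1:ℝ) ≤ (‖z‖)⁻¹ := by
      rw [le_inv_comm₀ one_pos hzn]; simpa using hz1.le
    calc ‖A‖ - ε' < ‖A z‖ := hz2
    _ = 1 * ‖A z‖ := (one_mul _).symm
    _ ≤ (‖z‖)⁻¹ * ‖A z‖ := by
        apply mul_le_mul_of_nonneg_right h1 (norm_nonneg _)
  -- unfold A x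
  have hAxeq : A x = T x + lam • x := by
    simp [hA, ContinuousLinearMap.add_apply]
  set u := T x with hu
  have hun : ‖u‖ ≤ r := by
    calc ‖u‖ ≤ ‖T‖ * ‖x‖ := T.le_opNorm x
    _ = r := by rw [hx1, mul_one]
  -- lower bound on the real part of the inner product
  have hnormlamx : ‖lam • x‖ = 1 := by rw [norm_smul, hl, hx1, mul_one]
  have hsq : (r + 1 - ε')^2 ≤ ‖u + lam • x‖^2 := by
    have h1 : r + 1 - ε' ≤ ‖u + lam • x‖ := by
      rw [← hAxeq]; rw [hT] at hAx; linarith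
    have h2 : 0 ≤ r + 1 - ε' := by linarith
    exact pow_le_pow_left₀ h2 h1 2
  have hexp : ‖u + lam • x‖^2 = ‖u‖^2 + 2 * RCLike.re (inner ℂ u (lam • x) : ℂ) + 1 := by
    rw [norm_add_sq (𝕜 := ℂ), hnormlamx]; ring
  set s : ℝ := RCLike.re (inner ℂ u (lam • x) : ℂ) with hs
  have hslb : r - ε' * (r+1) ≤ s := by
    nlinarith [hsq, hexp, hun, norm_nonneg u, hε'0]
  -- now bound the distance
  have hinner : RCLike.re (inner ℂ u ((lam * (r:ℂ)) • x) : ℂ) = r * s := by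
    have : ((lam * (r:ℂ)) • x) = (r:ℂ) • (lam • x) := by
      rw [smul_smul, mul_comm]
    rw [this, inner_smul_right]
    rw [hs]; exact RCLike.re_ofReal_mul _ _
  have hnormmu : ‖(lam * (r:ℂ)) • x‖ = r := by
    rw [norm_smul, norm_mul, hl, hx1, one_mul, mul_one, Complex.norm_real,
      Real.norm_of_nonneg hr0]
  have hfinal : ‖u - (lam * (r:ℂ)) • x‖^2 ≤ ε^2 := by
    have heq := norm_sub_sq (𝕜 := ℂ) u ((lam * (r:ℂ)) • x)
    rw [hinner, hnormmu] at heq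
    have hu2 : ‖u‖^2 ≤ r^2 := pow_le_pow_left₀ (norm_nonneg u) hun 2
    have hrs : r * (r - ε' * (r+1)) ≤ r * s := mul_le_mul_of_nonneg_left hslb hr0
    nlinarith [heq, hu2, hrs, hε'2]
  refine ⟨x, hx1, ?_⟩
  have h5 := Real.sqrt_le_sqrt hfinal
  rwa [Real.sqrt_sq (norm_nonneg _), Real.sqrt_sq hε.le] at h5

private lemma pow_approx {H : Type*} [NormedAddCommGroup H] [InnerProductSpace ℂ H]
    (T : H →L[ℂ] H) (μ : ℂ) (x : H) (hμ : ‖μ‖ ≤ ‖T‖) {ε : ℝ} (hε : 0 ≤ ε)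
    (hTx : ‖T x - μ • x‖ ≤ ε) :
    ∀ k : ℕ, ‖(T ^ k) x - μ ^ k • x‖ ≤ k * (‖T‖ + 1) ^ k * ε := by
  intro k
  induction k with
  | zero => simp
  | succ k ih =>
    have hr0 : 0 ≤ ‖T‖ := norm_nonneg T
    have hstep : (T ^ (k+1)) x - μ ^ (k+1) • x
        = T ((T ^ k) x - μ ^ k • x) + μ ^ k • (T x - μ • x) := by
      have h1 : (T ^ (k+1)) x = T ((T ^ k) x) := by
        rw [pow_succ' T k]; rfl
      have h2 : T ((T ^ k) x - μ ^ k • x) + μ ^ k • (T x - μ • x)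
          = T ((T ^ k) x) - μ ^ (k+1) • x := by
        rw [map_sub, map_smul, smul_sub, smul_smul, ← pow_succ]
        abel
      rw [h1, h2]
    rw [hstep]
    have h1 : ‖T ((T ^ k) x - μ ^ k • x)‖ ≤ ‖T‖ * (k * (‖T‖ + 1) ^ k * ε) := by
      calc ‖T ((T ^ k) x - μ ^ k • x)‖ ≤ ‖T‖ * ‖(T ^ k) x - μ ^ k • x‖ := T.le_opNorm _
      _ ≤ ‖T‖ * (k * (‖T‖ + 1) ^ k * ε) := by
          apply mul_le_mul_of_nonneg_left ih hr0
    have h2 : ‖μ ^ k • (T x - μ • x)‖ ≤ (‖T‖ + 1) ^ k * ε := by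
      rw [norm_smul, norm_pow]
      have : ‖μ‖ ^ k ≤ (‖T‖ + 1) ^ k :=
        pow_le_pow_left₀ (norm_nonneg μ) (by linarith) k
      have h3 : 0 ≤ ‖μ‖ ^ k := by positivity
      calc ‖μ‖ ^ k * ‖T x - μ • x‖ ≤ ‖μ‖ ^ k * ε := by
            exact mul_le_mul_of_nonneg_left hTx h3
      _ ≤ (‖T‖ + 1) ^ k * ε := mul_le_mul_of_nonneg_right this hε
    calc ‖T ((T ^ k) x - μ ^ k • x) + μ ^ k • (T x - μ • x)‖
        ≤ ‖T ((T ^ k) x - μ ^ k • x)‖ + ‖μ ^ k • (T x - μ • x)‖ := norm_add_le _ _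
    _ ≤ ‖T‖ * (k * (‖T‖ + 1) ^ k * ε) + (‖T‖ + 1) ^ k * ε := add_le_add h1 h2
    _ ≤ (k+1 : ℕ) * (‖T‖ + 1) ^ (k+1) * ε := by
        push_cast
        rw [pow_succ]
        have h4 : (0:ℝ) ≤ (‖T‖+1)^k := by positivity
        nlinarith [mul_nonneg (mul_nonneg h4 hε) (add_nonneg (Nat.cast_nonneg k : (0:ℝ) ≤ k) hr0)]

theorem stmt_16 {H : Type*} [NormedAddCommGroup H] [InnerProductSpace ℂ H]
    [CompleteSpace H] (T : H →L[ℂ] H)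
    (h : ∃ lam : ℂ, ‖lam‖ = 1 ∧ ‖T + lam • (1 : H →L[ℂ] H)‖ = ‖T‖ + 1)
    (m : ℕ) (hm : 1 ≤ m) :
    (∃ lam : ℂ, ‖lam‖ = 1 ∧ ‖T ^ m + lam • (1 : H →L[ℂ] H)‖ = ‖T ^ m‖ + 1) ∧
      ‖T ^ m‖ = ‖T‖ ^ m := by
  obtain ⟨lam, hl, hT⟩ := h
  rcases subsingleton_or_nontrivial H with hs | hs
  · exfalso
    have h0 : (T + lam • (1 : H →L[ℂ] H)) = 0 := by
      ext x; exact Subsingleton.elim _ _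
    have hT0 : ‖T‖ = 0 := by
      have : T = 0 := by ext x; exact Subsingleton.elim _ _
      rw [this, norm_zero]
    rw [h0, norm_zero, hT0] at hT
    norm_num at hT
  set r := ‖T‖ with hr
  have hr0 : 0 ≤ r := norm_nonneg T
  set μ : ℂ := lam * (r : ℂ) with hμ
  have hμn : ‖μ‖ = r := by
    rw [hμ, norm_mul, hl, one_mul, Complex.norm_real, Real.norm_of_nonneg hr0]
  set C : ℝ := m * (r + 1) ^ m with hC
  have hC0 : 0 < C := by
    have : (0:ℝ) < m := by exact_mod_cast hm
    positivity
  -- key: for every ε > 0, good approximation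
  have key : ∀ ε : ℝ, 0 < ε →
      ∃ x : H, ‖x‖ = 1 ∧ ‖(T ^ m) x - μ ^ m • x‖ ≤ ε := by
    intro ε hε
    obtain ⟨x, hx1, hx2⟩ := approx_eig T lam hl hT (div_pos hε hC0)
    refine ⟨x, hx1, ?_⟩
    have := pow_approx T μ x (le_of_eq hμn) (div_pos hε hC0).le hx2 m
    calc ‖(T ^ m) x - μ ^ m • x‖ ≤ m * (r + 1) ^ m * (ε / C) := this
    _ = C * (ε / C) := by rw [hC]
    _ = ε := by field_simp
  have hμmx : ∀ x : H, ‖x‖ = 1 → ‖μ ^ m • x‖ = r ^ m := by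
    intro x hx
    rw [norm_smul, norm_pow, hμn, hx, mul_one]
  -- norm of T^m from below
  have hlow : r ^ m ≤ ‖T ^ m‖ := by
    apply le_of_forall_pos_le_add
    intro ε hε
    obtain ⟨x, hx1, hx2⟩ := key ε hε
    have h1 : ‖(T ^ m) x‖ ≤ ‖T ^ m‖ := by
      calc ‖(T ^ m) x‖ ≤ ‖T ^ m‖ * ‖x‖ := (T ^ m).le_opNorm x
      _ = ‖T ^ m‖ := by rw [hx1, mul_one]
    have h2 : r ^ m ≤ ‖(T ^ m) x‖ + ε := by
      calc r ^ m = ‖μ ^ m • x‖ := (hμmx x hx1).symm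
      _ = ‖(T ^ m) x - ((T ^ m) x - μ ^ m • x)‖ := by congr 1; abel
      _ ≤ ‖(T ^ m) x‖ + ‖(T ^ m) x - μ ^ m • x‖ := norm_sub_le _ _
      _ ≤ ‖(T ^ m) x‖ + ε := by linarith
    linarith
  have hup : ‖T ^ m‖ ≤ r ^ m := norm_pow_le' T (by omega)
  have hnormpow : ‖T ^ m‖ = r ^ m := le_antisymm hup hlow
  refine ⟨⟨lam ^ m, by rw [norm_pow, hl, one_pow], ?_⟩, hnormpow⟩
  -- parallelism of T^m
  have hsum : ∀ x : H, ‖x‖ = 1 → ‖μ ^ m • x + lam ^ m • x‖ = r ^ m + 1 := by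
    intro x hx
    have : μ ^ m • x + lam ^ m • x = (lam ^ m * ((r:ℂ) ^ m + 1)) • x := by
      rw [← add_smul]
      congr 1
      rw [hμ, mul_pow]
      ring
    rw [this, norm_smul, hx, mul_one, norm_mul, norm_pow, hl, one_pow, one_mul]
    have : ((r:ℂ) ^ m + 1) = ((r ^ m + 1 : ℝ) : ℂ) := by push_cast; ring
    rw [this, Complex.norm_real, Real.norm_of_nonneg (by positivity)]
  have hge : r ^ m + 1 ≤ ‖T ^ m + lam ^ m • (1 : H →L[ℂ] H)‖ := by
    apply le_of_forall_pos_le_add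
    intro ε hε
    obtain ⟨x, hx1, hx2⟩ := key ε hε
    have happly : (T ^ m + lam ^ m • (1 : H →L[ℂ] H)) x = (T ^ m) x + lam ^ m • x := by
      simp [ContinuousLinearMap.add_apply]
    have h1 : ‖(T ^ m) x + lam ^ m • x‖ ≤ ‖T ^ m + lam ^ m • (1 : H →L[ℂ] H)‖ := by
      rw [← happly]
      calc ‖(T ^ m + lam ^ m • (1 : H →L[ℂ] H)) x‖
          ≤ ‖T ^ m + lam ^ m • (1 : H →L[ℂ] H)‖ * ‖x‖ := le_opNorm _ x
      _ = _ := by rw [hx1, mul_one]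
    have h2 : r ^ m + 1 - ε ≤ ‖(T ^ m) x + lam ^ m • x‖ := by
      have h4 : ‖μ ^ m • x + lam ^ m • x‖ ≤ ‖(T ^ m) x + lam ^ m • x‖ + ε := by
        calc ‖μ ^ m • x + lam ^ m • x‖
            = ‖((T ^ m) x + lam ^ m • x) - ((T ^ m) x - μ ^ m • x)‖ := by congr 1; abel
        _ ≤ ‖(T ^ m) x + lam ^ m • x‖ + ‖(T ^ m) x - μ ^ m • x‖ := norm_sub_le _ _
        _ ≤ ‖(T ^ m) x + lam ^ m • x‖ + ε := by linarith
      rw [hsum x hx1] at h4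
      linarith
    linarith
  have hle : ‖T ^ m + lam ^ m • (1 : H →L[ℂ] H)‖ ≤ r ^ m + 1 := by
    calc ‖T ^ m + lam ^ m • (1 : H →L[ℂ] H)‖
        ≤ ‖T ^ m‖ + ‖lam ^ m • (1 : H →L[ℂ] H)‖ := norm_add_le _ _
    _ = r ^ m + 1 := by
        rw [hnormpow, norm_smul, norm_pow, hl, one_pow, one_mul, norm_one]
  rw [hnormpow]
  linarith
end

section
/- Let 𝒜 be a C*-algebra and a, b ∈ 𝒜. If there exist a state φ on 𝒜 and a unimodular λ with φ(a* b) = λ‖a‖‖b‖, then a ∥ b, i.e., ‖a + μb‖ = ‖a‖ + ‖b‖ for some unimodular μ. -/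
open ComplexConjugate

theorem stmt_18 {A : Type*} [NormedRing A] [StarRing A] [CStarRing A]
    [NormedAlgebra ℂ A] [StarModule ℂ A] [PartialOrder A] [StarOrderedRing A]
    (a b : A) (φ : A →L[ℂ] ℂ) (hpos : ∀ x : A, 0 ≤ x → 0 ≤ (φ x).re ∧ (φ x).im = 0)
    (hnorm : ‖φ‖ = 1) (lam : ℂ) (hlam : ‖lam‖ = 1)
    (h : φ (star a * b) = lam * (‖a‖ * ‖b‖)) :
    ∃ μ : ℂ, ‖μ‖ = 1 ∧ ‖a + μ • b‖ = ‖a‖ + ‖b‖ := by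
  classical
  by_cases ha : a = 0
  · exact ⟨1, by simp, by simp [ha]⟩
  by_cases hb : b = 0
  · exact ⟨1, by simp, by simp [hb]⟩
  have ha0 : 0 < ‖a‖ := norm_pos_iff.mpr ha
  have hb0 : 0 < ‖b‖ := norm_pos_iff.mpr hb
  have hIm : ∀ x : A, (φ (star x * x)).im = 0 := fun x => (hpos _ (star_mul_self_nonneg x)).2
  have hRe : ∀ x : A, 0 ≤ (φ (star x * x)).re := fun x => (hpos _ (star_mul_self_nonneg x)).1
  -- conjugate symmetry of (x, y) ↦ φ (star x * y)
  have hsym : ∀ x y : A, φ (star y * x) = conj (φ (star x * y)) := by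
    intro x y
    have exp1 : φ (star (x + y) * (x + y))
        = φ (star x * x) + φ (star x * y) + φ (star y * x) + φ (star y * y) := by
      rw [star_add, add_mul, mul_add, mul_add, map_add, map_add, map_add]
      ring
    have e1 : (φ (star x * y)).im + (φ (star y * x)).im = 0 := by
      have h1 := hIm (x + y)
      rw [exp1] at h1
      simp only [Complex.add_im, hIm x, hIm y, zero_add, add_zero] at h1
      linarith
    have exp2 : φ (star (x + Complex.I • y) * (x + Complex.I • y))
        = φ (star x * x) + Complex.I * φ (star x * y)
          - Complex.I * φ (star y * x) + φ (star y * y) := by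
      rw [star_add, star_smul, add_mul, mul_add, mul_add, smul_mul_assoc, smul_mul_assoc,
        mul_smul_comm, mul_smul_comm, smul_smul, map_add, map_add, map_add, map_smul,
        map_smul, map_smul]
      simp only [Complex.star_def, Complex.conj_I, smul_eq_mul]
      linear_combination (-(φ (star y * y))) * Complex.I_mul_I
    have e2 : (φ (star x * y)).re - (φ (star y * x)).re = 0 := by
      have h2 := hIm (x + Complex.I • y)
      rw [exp2] at h2
      simp only [Complex.add_im, Complex.sub_im, Complex.mul_im, Complex.I_re, Complex.I_im,
        hIm x, hIm y, zero_mul, one_mul, zero_add, add_zero] at h2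
      linarith
    apply Complex.ext
    · simp only [Complex.conj_re]; linarith
    · simp only [Complex.conj_im]; linarith
  have hsnorm : ‖φ (star a * b)‖ = ‖a‖ * ‖b‖ := by
    rw [h, norm_mul, hlam, one_mul, norm_mul, Complex.norm_real, Complex.norm_real,
      Real.norm_of_nonneg (norm_nonneg a), Real.norm_of_nonneg (norm_nonneg b)]
  set s : ℂ := φ (star a * b) with hs_def
  have h' : φ (star a * b) = lam * (‖a‖ * ‖b‖) := by rw [← hs_def]; exact h
  have hspos : 0 < ‖s‖ := by rw [hsnorm]; positivity
  set Aq : ℝ := (φ (star a * a)).re with hA_def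
  set Bq : ℝ := (φ (star b * b)).re with hB_def
  -- Cauchy–Schwarz : ‖s‖ ^ 2 ≤ Aq * Bq
  have hne : ((‖s‖ : ℝ) : ℂ) ≠ 0 :=
    Complex.ofReal_ne_zero.mpr (by exact hspos.ne')
  obtain ⟨c, hcs, hccs, hcc⟩ : ∃ c : ℂ, c * s = (‖s‖ : ℂ) ∧
      conj c * conj s = (‖s‖ : ℂ) ∧ conj c * c = 1 := by
    refine ⟨conj s / ‖s‖, ?_, ?_, ?_⟩
    · rw [div_mul_eq_mul_div, Complex.conj_mul', div_eq_iff hne]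
      ring
    · rw [← map_mul, div_mul_eq_mul_div, Complex.conj_mul',
        sq, mul_div_assoc, div_self hne, mul_one, Complex.conj_ofReal]
    · have e : conj (conj s / (‖s‖ : ℂ)) * (conj s / (‖s‖ : ℂ))
          = (conj s * s) / ((‖s‖ : ℂ) * (‖s‖ : ℂ)) := by
        rw [map_div₀, Complex.conj_conj, Complex.conj_ofReal]; ring
      rw [e, Complex.conj_mul']
      field_simp
  have expz : ∀ t : ℝ, φ (star ((t : ℂ) • a - c • b) * ((t : ℂ) • a - c • b))
      = ((t : ℂ) * t) * φ (star a * a) - (t : ℂ) * (c * s)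
        - (t : ℂ) * (conj c * conj s) + (conj c * c) * φ (star b * b) := by
    intro t
    have hba : φ (star b * a) = conj s := by rw [hsym a b, ← hs_def]
    simp only [star_sub, star_smul, Complex.star_def, Complex.conj_ofReal, sub_mul, mul_sub,
      smul_mul_assoc, mul_smul_comm, smul_smul, map_sub, map_smul, smul_eq_mul, hba, ← hs_def]
    ring
  have hQ : ∀ t : ℝ, 0 ≤ Aq * (t * t) + (-(2 * ‖s‖)) * t + Bq := by
    intro t
    have h0 := hRe ((t : ℂ) • a - c • b)
    rw [expz t, hcs, hccs, hcc, one_mul] at h0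
    simp only [Complex.add_re, Complex.sub_re, Complex.mul_re, Complex.ofReal_re,
      Complex.ofReal_im, hIm a, hIm b, mul_zero, zero_mul, sub_zero, zero_sub, add_zero] at h0
    rw [← hA_def, ← hB_def] at h0
    ring_nf at h0 ⊢
    linarith
  have hdisc := discrim_le_zero hQ
  rw [discrim] at hdisc
  have hCS : ‖s‖ ^ 2 ≤ Aq * Bq := by nlinarith [hdisc]
  have hAle : Aq ≤ ‖a‖ * ‖a‖ := by
    have h1 : Aq ≤ ‖φ (star a * a)‖ := by
      rw [hA_def]; exact Complex.re_le_norm _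
    have h2 : ‖φ (star a * a)‖ ≤ ‖φ‖ * ‖star a * a‖ := φ.le_opNorm _
    rw [hnorm, one_mul, CStarRing.norm_star_mul_self] at h2
    linarith
  have hBle : Bq ≤ ‖b‖ * ‖b‖ := by
    have h1 : Bq ≤ ‖φ (star b * b)‖ := by
      rw [hB_def]; exact Complex.re_le_norm _
    have h2 : ‖φ (star b * b)‖ ≤ ‖φ‖ * ‖star b * b‖ := φ.le_opNorm _
    rw [hnorm, one_mul, CStarRing.norm_star_mul_self] at h2
    linarith
  have hA0 : 0 ≤ Aq := hRe a
  have hAeq : Aq = ‖a‖ * ‖a‖ := by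
    have hsn2 : ‖s‖ ^ 2 = (‖a‖ * ‖b‖) ^ 2 := by rw [hsnorm]
    have h1 : ‖a‖ * ‖a‖ * (‖b‖ * ‖b‖) ≤ Aq * (‖b‖ * ‖b‖) := by
      nlinarith [hCS, mul_le_mul_of_nonneg_left hBle hA0, hsn2]
    have h2 : ‖a‖ * ‖a‖ ≤ Aq := le_of_mul_le_mul_right h1 (mul_pos hb0 hb0)
    exact le_antisymm hAle h2
  -- conclusion with μ = conj lam
  have hμ : ‖(conj lam : ℂ)‖ = 1 := by rw [RCLike.norm_conj, hlam]
  refine ⟨conj lam, hμ, ?_⟩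
  have hml : conj lam * lam = 1 := by
    rw [Complex.conj_mul', hlam]; norm_num
  have hφaa : φ (star a * a) = ((‖a‖ * ‖a‖ : ℝ) : ℂ) := by
    apply Complex.ext
    · rw [← hA_def, hAeq, Complex.ofReal_re]
    · rw [hIm a, Complex.ofReal_im]
  have hkey : φ (star a * (a + conj lam • b)) = ((‖a‖ * ‖a‖ + ‖a‖ * ‖b‖ : ℝ) : ℂ) := by
    rw [mul_add, mul_smul_comm, map_add, map_smul, smul_eq_mul, h', hφaa,
      ← mul_assoc, hml, one_mul]
    push_cast
    ring
  have hup : ‖a + conj lam • b‖ ≤ ‖a‖ + ‖b‖ := by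
    calc ‖a + conj lam • b‖ ≤ ‖a‖ + ‖conj lam • b‖ := norm_add_le _ _
      _ = ‖a‖ + ‖b‖ := by rw [norm_smul, hμ, one_mul]
  have hlow : ‖a‖ + ‖b‖ ≤ ‖a + conj lam • b‖ := by
    have h1 : ‖φ (star a * (a + conj lam • b))‖ = ‖a‖ * ‖a‖ + ‖a‖ * ‖b‖ := by
      rw [hkey, Complex.norm_real, Real.norm_of_nonneg (by positivity)]
    have h2 : ‖φ (star a * (a + conj lam • b))‖ ≤ ‖φ‖ * ‖star a * (a + conj lam • b)‖ :=
      φ.le_opNorm _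
    have h3 : ‖star a * (a + conj lam • b)‖ ≤ ‖star a‖ * ‖a + conj lam • b‖ := norm_mul_le _ _
    rw [hnorm, one_mul] at h2
    rw [norm_star] at h3
    have hmain : ‖a‖ * (‖a‖ + ‖b‖) ≤ ‖a‖ * ‖a + conj lam • b‖ := by nlinarith
    exact le_of_mul_le_mul_left hmain ha0
  linarith
end
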